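/- Every connected outerplanar graph G on n ≥ 3 vertices satisfies ρ(G) ≤ 3/2 + √(n - 7/4). -/

import Mathlib

open SimpleGraph Matrix

/-- `H` is a minor of `G`: branch sets are connected, pairwise disjoint, and
edges of `H` are represented by edges between branch sets. -/
def MinorOf {α : Type*} {β : Type*} (H : SimpleGraph α) (G : SimpleGraph β) : Prop :=
  ∃ f : α → Set β,
    (∀ a, (G.induce (f a)).Connected) ∧
    (Pairwise fun a b => Disjoint (f a) (f b)) ∧
    ∀ a b, H.Adj a b → ∃ u ∈ f a, ∃ v ∈ f b, G.Adj u v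

/-- A graph is outerplanar iff it has no `K₄`-minor and no `K_{2,3}`-minor. -/
def Outerplanar {β : Type*} (G : SimpleGraph β) : Prop :=
  ¬ MinorOf (completeGraph (Fin 4)) G ∧ ¬ MinorOf (completeBipartiteGraph (Fin 2) (Fin 3)) G

/-- The join `G ∨ H` of two graphs. -/
def graphJoin {α β : Type*} (G : SimpleGraph α) (H : SimpleGraph β) : SimpleGraph (α ⊕ β) where
  Adj x y :=
    match x, y with
    | Sum.inl a, Sum.inl b => G.Adj a b
    | Sum.inr a, Sum.inr b => H.Adj a b
    | Sum.inl _, Sum.inr _ => True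
    | Sum.inr _, Sum.inl _ => True
  symm := ⟨by rintro (a|a) (b|b) h <;> first | exact h.symm | trivial⟩
  loopless := ⟨by
    rintro (a|a) h
    · exact G.loopless.irrefl a h
    · exact H.loopless.irrefl a h⟩

open scoped Classical in
/-- The adjacency spectral radius of a finite graph. -/
noncomputable def specRad {V : Type*} [Fintype V] [DecidableEq V]
    (G : SimpleGraph V) : ℝ :=
  sSup (spectrum ℝ (G.adjMatrix ℝ))

/-- The disjoint union of paths with orders given by the list `L`. -/
def pathsUnion (L : List ℕ) : SimpleGraph (Σ i : Fin L.length, Fin (L.get i)) where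
  Adj x y := x.1 = y.1 ∧ (x.2.val + 1 = y.2.val ∨ y.2.val + 1 = x.2.val)
  symm := ⟨by rintro ⟨i, a⟩ ⟨j, b⟩ ⟨h1, h2⟩; exact ⟨h1.symm, h2.symm⟩⟩
  loopless := ⟨by rintro ⟨i, a⟩ ⟨-, h⟩; rcases h with h | h <;> omega⟩

/-- `B_{tl}`: `t` edge-disjoint `l`-cycles sharing exactly one common vertex (`none`). -/
def bouquet (t l : ℕ) : SimpleGraph (Option (Fin t × Fin (l - 1))) where
  Adj x y :=
    match x, y with
    | none, none => False
    | none, some p => p.2.val = 0 ∨ p.2.val = l - 2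
    | some p, none => p.2.val = 0 ∨ p.2.val = l - 2
    | some p, some q => p.1 = q.1 ∧ (p.2.val + 1 = q.2.val ∨ q.2.val + 1 = p.2.val)
  symm := ⟨by
    rintro (_|p) (_|q) h
    · exact h
    · exact h
    · exact h
    · exact ⟨h.1.symm, h.2.symm⟩⟩
  loopless := ⟨by
    rintro (_|p) h
    · exact h
    · rcases h.2 with h' | h' <;> omega⟩

/-- `F` occurs as a subgraph of `G`. -/
def ContainsSubgraph {α β : Type*} (F : SimpleGraph α) (G : SimpleGraph β) : Prop :=
  ∃ f : F →g G, Function.Injective f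

/-- `G` has a matching of size `k`. -/
def HasMatching {V : Type*} (G : SimpleGraph V) (k : ℕ) : Prop :=
  ∃ M : Finset (Sym2 V), M.card = k ∧ ↑M ⊆ G.edgeSet ∧
    (M : Set (Sym2 V)).Pairwise fun e f => ∀ v, v ∈ e → v ∉ f

/-- A linear forest: a disjoint union of (possibly trivial) paths. -/
def IsLinearForest {V : Type*} (H : SimpleGraph V) : Prop :=
  H.IsAcyclic ∧ ∀ v, (H.neighborSet v).ncard ≤ 2

/-- `G` contains a cycle of length `l`. -/
def HasCycleLength {V : Type*} (G : SimpleGraph V) (l : ℕ) : Prop :=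
  ∃ (u : V) (w : G.Walk u u), w.IsCycle ∧ w.length = l


section OuterplanarAux
open SimpleGraph List Finset Matrix

lemma connected_induce_of_chain {V : Type*} {G : SimpleGraph V} {l : List V}
    (hne : l ≠ []) (hch : List.Chain' G.Adj l) :
    (G.induce {x | x ∈ l}).Connected := by
  rw [connected_iff]
  have hhead : l.head hne ∈ l := List.head_mem hne
  constructor
  · have key : ∀ i : ℕ, ∀ h : i < l.length,
        (G.induce {x | x ∈ l}).Reachable ⟨l.head hne, hhead⟩ ⟨l.get ⟨i, h⟩, List.get_mem l _⟩ := by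
      intro i
      induction i with
      | zero =>
        intro h
        have e : l.get ⟨0, h⟩ = l.head hne := by
          cases l with
          | nil => exact absurd rfl hne
          | cons a t => rfl
        have e2 : (⟨l.get ⟨0, h⟩, List.get_mem l _⟩ : {x // x ∈ {x | x ∈ l}}) = ⟨l.head hne, hhead⟩ :=
          Subtype.ext e
        rw [e2]
      | succ n ih =>
        intro h
        have hn : n < l.length := Nat.lt_of_succ_lt h
        have hadj : G.Adj (l.get ⟨n, hn⟩) (l.get ⟨n+1, h⟩) := by
          replace hch := List.isChain_iff_getElem.mp hch
          exact hch n (by omega)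
        have hstep : (G.induce {x | x ∈ l}).Adj ⟨l.get ⟨n, hn⟩, List.get_mem l _⟩
            ⟨l.get ⟨n+1, h⟩, List.get_mem l _⟩ := hadj
        exact (ih hn).trans hstep.reachable
    rintro ⟨x, hx⟩ ⟨y, hy⟩
    obtain ⟨⟨i, hi⟩, rfl⟩ := List.mem_iff_get.mp hx
    obtain ⟨⟨j, hj⟩, rfl⟩ := List.mem_iff_get.mp hy
    exact (key i hi).symm.trans (key j hj)
  · exact ⟨⟨l.head hne, hhead⟩⟩


lemma singleton_connected {V : Type*} (G : SimpleGraph V) (v : V) :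
    (G.induce {v}).Connected := by
  have h := connected_induce_of_chain (G := G) (l := [v]) (by simp) (List.IsChain.singleton v)
  have he : {x | x ∈ [v]} = ({v} : Set V) := by ext x; simp
  rwa [he] at h


lemma cycle_list {W : Type*} {H : SimpleGraph W} {v : W} (c : H.Walk v v) (hc : c.IsCycle) :
    ∃ l : List W, l.Nodup ∧ 3 ≤ l.length ∧ List.Chain' H.Adj l ∧
      (∀ hne : l ≠ [], H.Adj (l.getLast hne) (l.head hne)) ∧
      (∀ hne : l ≠ [], l.head hne = v) := by
  have hlen : 3 ≤ c.length := hc.three_le_length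
  have hsupl : c.support.length = c.length + 1 := c.length_support
  have htail : c.support.tail ≠ [] := by
    intro he
    have h0 : c.support.tail.length = 0 := by rw [he]; rfl
    rw [List.length_tail, hsupl] at h0
    omega
  have hcons : c.support = v :: c.support.tail := c.support_eq_cons
  have hgl : c.support.tail.getLast htail = v := by
    rw [List.getLast_tail]
    exact c.getLast_support
  have htd := List.dropLast_append_getLast htail
  rw [hgl] at htd
  set mid := c.support.tail.dropLast with hmid
  have hsup2 : c.support = (v :: mid) ++ [v] := by
    rw [hcons, ← htd]; rfl
  refine ⟨v :: mid, ?_, ?_, ?_, ?_, fun _ => rfl⟩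
  · have hnd : c.support.tail.Nodup := hc.2
    rw [← htd] at hnd
    rw [List.nodup_append] at hnd
    refine List.nodup_cons.mpr ⟨?_, hnd.1⟩
    intro hv
    exact hnd.2.2 v hv v (List.mem_singleton_self v) rfl
  · have : (v :: mid).length + 1 = c.support.length := by
      rw [hsup2]; simp
    omega
  · have := c.isChain_adj_support
    rw [hsup2] at this
    exact (List.isChain_append.mp this).1
  · intro hne
    have hca := c.isChain_adj_support
    rw [hsup2] at hca
    have h3 := (List.isChain_append.mp hca).2.2
    have : H.Adj ((v :: mid).getLast hne) v := by
      apply h3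
      · simp [List.getLast?_eq_getLast hne]
      · rfl
    simpa using this

/-- A forest on a nonempty finite vertex set has at most `card - 1` edges. -/
lemma acyclic_card_edgeFinset_le {W : Type*} [Fintype W] [DecidableEq W] [Nonempty W]
    {H : SimpleGraph W} [Fintype H.edgeSet] (hH : H.IsAcyclic) :
    H.edgeFinset.card + 1 ≤ Fintype.card W := by
  classical
  -- take a maximal acyclic supergraph
  obtain ⟨M, hMmem, hMmax⟩ := Finset.exists_maximal
    (s := Finset.univ.filter fun K : SimpleGraph W => H ≤ K ∧ K.IsAcyclic)
    ⟨H, by simp [hH]⟩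
  change M ∈ Finset.univ.filter _ at hMmem
  rw [Finset.mem_filter] at hMmem
  obtain ⟨-, hHM, hMac⟩ := hMmem
  have hMconn : M.Connected := by
    rw [connected_iff]
    refine ⟨?_, ‹Nonempty W›⟩
    intro x y
    by_contra hreach
    have hxy : x ≠ y := by rintro rfl; exact hreach (Reachable.refl x)
    have hnadj : ¬ M.Adj x y := fun h => hreach h.reachable
    set K := M ⊔ edge x y with hK
    have hKadj : K.Adj x y := by
      simp [hK, edge_adj, hxy]
    have hlt : M < K := by
      constructor
      · exact le_sup_left
      · intro hle
        exact hnadj (hle x y hKadj)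
    -- K \ edge = M
    have hdel : K \ fromEdgeSet {s(x, y)} = M := by
      ext a b
      simp only [sdiff_adj, hK, sup_adj, edge_adj, fromEdgeSet_adj, Set.mem_singleton_iff]
      constructor
      · rintro ⟨h1 | h2, h3⟩
        · exact h1
        · exfalso
          apply h3
          refine ⟨?_, h2.2⟩
          rcases h2.1 with ⟨rfl, rfl⟩ | ⟨rfl, rfl⟩
          · rfl
          · exact Sym2.eq_swap
      · intro hM
        refine ⟨Or.inl hM, ?_⟩
        rintro ⟨he, -⟩
        rw [Sym2.eq_iff] at he
        rcases he with ⟨rfl, rfl⟩ | ⟨rfl, rfl⟩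
        · exact hnadj hM
        · exact hnadj hM.symm
    have hbridge : K.IsBridge s(x, y) := by
      rw [isBridge_iff]
      show ¬ (K \ fromEdgeSet {s(x, y)}).Reachable x y
      rw [hdel]
      exact hreach
    have hKac : K.IsAcyclic := by
      intro w c hc
      have hnot := hbridge.notMem_edges_of_isCycle hc
      have hedges : ∀ e ∈ c.edges, e ∈ M.edgeSet := by
        intro e he
        have heK := c.edges_subset_edgeSet he
        have : e ∈ (K \ fromEdgeSet {s(x, y)}).edgeSet := by
          rw [edgeSet_sdiff]
          refine ⟨heK, ?_⟩
          simp only [edgeSet_fromEdgeSet, Set.mem_diff, Set.mem_singleton_iff]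
          intro hmem
          exact hnot (hmem.1 ▸ he)
        rwa [hdel] at this
      exact hMac (c.transfer M hedges) (hc.transfer hedges)
    exact hlt.not_ge (hMmax (by simp [hKac, le_trans hHM hlt.le]) hlt.le)
  have htree : M.IsTree := ⟨hMconn, hMac⟩
  have hcard := htree.card_edgeFinset
  have hle : H.edgeFinset.card ≤ M.edgeFinset.card :=
    Finset.card_le_card (edgeFinset_mono hHM)
  omega

lemma k4_minor_of_cycle {V : Type*} {G : SimpleGraph V} {u : V} {l : List V}
    (hnd : l.Nodup) (hlen : 3 ≤ l.length) (hch : List.Chain' G.Adj l)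
    (hcl : ∀ hne : l ≠ [], G.Adj (l.getLast hne) (l.head hne))
    (hA : ∀ x ∈ l, G.Adj u x) :
    MinorOf (completeGraph (Fin 4)) G := by
  match l, hlen, hnd, hch, hcl, hA with
  | v₀ :: v₁ :: p :: P, _, hnd, hch, hcl, hA =>
  set M := p :: P with hM
  have hMne : M ≠ [] := by simp [hM]
  have hadj01 : G.Adj v₀ v₁ := hch.rel_head
  have hch1 : List.Chain' G.Adj (v₁ :: M) := hch.tail
  have hadj1M : G.Adj v₁ (M.head hMne) := by
    have := hch1.rel_head
    exact this
  have hchM : List.Chain' G.Adj M := hch1.tail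
  have hgl : (v₀ :: v₁ :: M).getLast (by simp) = M.getLast hMne := by
    rw [List.getLast_cons (by simp), List.getLast_cons hMne]
  have hadjlast : G.Adj (M.getLast hMne) v₀ := by
    have := hcl (by simp)
    rw [hgl] at this
    simpa using this
  have hu0 : G.Adj u v₀ := hA v₀ (by simp)
  have hu1 : G.Adj u v₁ := hA v₁ (by simp)
  have huM : G.Adj u (M.head hMne) :=
    hA _ (List.mem_cons_of_mem _ (List.mem_cons_of_mem _ (List.head_mem hMne)))
  have hund : ∀ x ∈ (v₀ :: v₁ :: M), x ≠ u := by
    intro x hx h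
    subst h
    exact G.loopless.irrefl x (hA x hx)
  have hu0' : u ≠ v₀ := fun h => hund v₀ (by simp) h.symm
  have hu1' : u ≠ v₁ := fun h => hund v₁ (by simp) h.symm
  have huM' : u ∉ M := fun h => hund u (List.mem_cons_of_mem _ (List.mem_cons_of_mem _ h)) rfl
  rw [List.nodup_cons, List.nodup_cons] at hnd
  have h01 : v₀ ≠ v₁ := fun h => hnd.1 (h ▸ List.mem_cons_self)
  have h0M : v₀ ∉ M := fun h => hnd.1 (List.mem_cons_of_mem _ h)
  have h1M : v₁ ∉ M := hnd.2.1
  have hheadM : M.head hMne ∈ {x | x ∈ M} := List.head_mem hMne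
  have hlastM : M.getLast hMne ∈ {x | x ∈ M} := List.getLast_mem hMne
  refine ⟨![{u}, {v₀}, {v₁}, {x | x ∈ M}], ?_, ?_, ?_⟩
  · intro a
    fin_cases a
    · exact singleton_connected G u
    · exact singleton_connected G v₀
    · exact singleton_connected G v₁
    · exact connected_induce_of_chain hMne hchM
  · intro a b hab
    fin_cases a <;> fin_cases b <;>
      simp_all [Set.disjoint_singleton_left, Set.disjoint_singleton_right, Set.disjoint_singleton,
        eq_comm] <;> tauto
  · intro a b hab
    rw [completeGraph_eq_top, top_adj] at hab
    fin_cases a <;> fin_cases b <;> simp only [Matrix.cons_val_zero, Matrix.cons_val_one,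
      Matrix.head_cons, Matrix.cons_val_two, Matrix.tail_cons, Matrix.cons_val_three] <;>
      first
      | exact absurd rfl hab
      | exact ⟨u, rfl, v₀, rfl, hu0⟩
      | exact ⟨u, rfl, v₁, rfl, hu1⟩
      | exact ⟨u, rfl, M.head hMne, hheadM, huM⟩
      | exact ⟨v₀, rfl, u, rfl, hu0.symm⟩
      | exact ⟨v₁, rfl, u, rfl, hu1.symm⟩
      | exact ⟨M.head hMne, hheadM, u, rfl, huM.symm⟩
      | exact ⟨v₀, rfl, v₁, rfl, hadj01⟩
      | exact ⟨v₁, rfl, v₀, rfl, hadj01.symm⟩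
      | exact ⟨v₁, rfl, M.head hMne, hheadM, hadj1M⟩
      | exact ⟨M.head hMne, hheadM, v₁, rfl, hadj1M.symm⟩
      | exact ⟨v₀, rfl, M.getLast hMne, hlastM, hadjlast.symm⟩
      | exact ⟨M.getLast hMne, hlastM, v₀, rfl, hadjlast⟩

lemma k23_minor_of_cycle {V : Type*} {G : SimpleGraph V} {u : V} {l : List V}
    (hnd : l.Nodup) (hlen : 3 ≤ l.length)
    (hch : List.Chain' (fun x y => G.Adj x y ∧ (G.Adj u x ↔ ¬ G.Adj u y)) l)
    (hcl : ∀ hne : l ≠ [], G.Adj (l.getLast hne) (l.head hne) ∧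
      (G.Adj u (l.getLast hne) ↔ ¬ G.Adj u (l.head hne)))
    (hhead : ∀ hne : l ≠ [], G.Adj u (l.head hne))
    (hu : ∀ x ∈ l, x ≠ u) :
    MinorOf (completeBipartiteGraph (Fin 2) (Fin 3)) G := by
  match l, hlen, hnd, hch, hcl, hhead, hu with
  | [a, b, c], _, hnd, hch, hcl, hhead, hu =>
    exfalso
    have h1 := hch.rel_head
    have h2 := (hch.tail).rel_head
    have h3 := (hcl (by simp)).2
    have h4 := hhead (by simp)
    simp only [List.getLast, List.head] at h1 h2 h3 h4
    tauto
  | v₀ :: w₀ :: q :: r :: Q, _, hnd, hch, hcl, hhead, hu => ?_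
  set T : List V := q :: r :: Q with hT
  have hTne : T ≠ [] := by simp [hT]
  set M : List V := T.dropLast with hMdef
  have hMne : M ≠ [] := by
    have : T.length = M.length + 1 := by
      rw [hMdef, List.length_dropLast]; simp [hT]
    intro h
    rw [h] at this
    simp [hT] at this
  set wl : V := T.getLast hTne with hwl
  have hTsplit : M ++ [wl] = T := List.dropLast_append_getLast hTne
  -- heads and lasts
  have hl_ne : (v₀ :: w₀ :: T) ≠ [] := by simp
  have hhead' : (v₀ :: w₀ :: T).head hl_ne = v₀ := rfl
  have hlast : (v₀ :: w₀ :: T).getLast hl_ne = wl := by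
    rw [List.getLast_cons (by simp), List.getLast_cons hTne]
  -- basic adjacencies
  have hA0 : G.Adj u v₀ := hhead hl_ne
  have hR1 := hch.rel_head    -- R v₀ w₀
  have hadj0 : G.Adj v₀ w₀ := hR1.1
  have hw₀na : ¬ G.Adj u w₀ := hR1.2.mp hA0
  have hchT : List.Chain' (fun x y => G.Adj x y ∧ (G.Adj u x ↔ ¬ G.Adj u y)) (w₀ :: T) := hch.tail
  have hR2 : G.Adj w₀ (T.head hTne) ∧ (G.Adj u w₀ ↔ ¬ G.Adj u (T.head hTne)) := by
    have := hchT.rel_head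
    exact this
  have hadjw0h : G.Adj w₀ (M.head hMne) := hR2.1
  have hAh : G.Adj u (M.head hMne) := by
    have h2 : G.Adj u w₀ ↔ ¬ G.Adj u (M.head hMne) := hR2.2
    by_contra hcon
    exact hw₀na (h2.mpr hcon)
  have hchT' : List.Chain' (fun x y => G.Adj x y ∧ (G.Adj u x ↔ ¬ G.Adj u y)) T := hchT.tail
  have hchMwl : List.Chain' (fun x y => G.Adj x y ∧ (G.Adj u x ↔ ¬ G.Adj u y)) (M ++ [wl]) := by
    rw [hTsplit]; exact hchT'
  have hchM : List.Chain' G.Adj M :=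
    ((List.isChain_append.mp hchMwl).1).imp (fun a b h => h.1)
  have hadjMl : G.Adj (M.getLast hMne) wl := by
    have h3 := (List.isChain_append.mp hchMwl).2.2
    exact (h3 (M.getLast hMne) (by simp [List.getLast?_eq_getLast hMne]) wl rfl).1
  have hclose := hcl hl_ne
  rw [hlast, hhead'] at hclose
  have hadjwl0 : G.Adj wl v₀ := hclose.1
  have hwlna : ¬ G.Adj u wl := by
    by_contra hcon
    exact (hclose.2.mp hcon) hA0
  -- distinctness
  have hv0u : v₀ ≠ u := hu v₀ (by simp)
  have hw0u : w₀ ≠ u := hu w₀ (by simp)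
  have hwlu : wl ≠ u := hu wl (by
    have : wl ∈ T := by rw [hwl]; exact List.getLast_mem hTne
    simp [this])
  have huM : u ∉ M := by
    intro h
    exact hu u (by
      have : u ∈ T := by rw [← hTsplit]; exact List.mem_append_left _ h
      simp [this]) rfl
  rw [List.nodup_cons, List.nodup_cons, ← hTsplit, List.nodup_append] at hnd
  have hv0w0 : v₀ ≠ w₀ := fun h => hnd.1 (h ▸ List.mem_cons_self)
  have hv0M : v₀ ∉ M := fun h => hnd.1 (List.mem_cons_of_mem _ (List.mem_append_left _ h))
  have hv0wl : v₀ ≠ wl := fun h => hnd.1 (List.mem_cons_of_mem _ (List.mem_append_right _ (by simp [h])))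
  have hw0M : w₀ ∉ M := fun h => hnd.2.1 (List.mem_append_left _ h)
  have hw0wl : w₀ ≠ wl := fun h => hnd.2.1 (List.mem_append_right _ (by simp [h]))
  have hwlM : wl ∉ M := fun h => hnd.2.2.2.2 wl h wl (List.mem_singleton_self wl) rfl
  have hheadM : M.head hMne ∈ {x | x ∈ M} := List.head_mem hMne
  have hlastM : M.getLast hMne ∈ {x | x ∈ M} := List.getLast_mem hMne
  refine ⟨Sum.elim ![{v₀}, {x | x ∈ M}] ![{u}, {w₀}, {wl}], ?_, ?_, ?_⟩
  · rintro (i | j)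
    · fin_cases i
      · exact singleton_connected G v₀
      · exact connected_induce_of_chain hMne hchM
    · fin_cases j
      · exact singleton_connected G u
      · exact singleton_connected G w₀
      · exact singleton_connected G wl
  · have d1 : Disjoint ({v₀} : Set V) {x | x ∈ M} := by
      rw [Set.disjoint_singleton_left]; exact hv0M
    have d2 : Disjoint ({v₀} : Set V) {u} := by simp [hv0u]
    have d3 : Disjoint ({v₀} : Set V) {w₀} := by simp [hv0w0]
    have d4 : Disjoint ({v₀} : Set V) {wl} := by simp [hv0wl]
    have d5 : Disjoint {x | x ∈ M} ({u} : Set V) := by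
      rw [Set.disjoint_singleton_right]; exact huM
    have d6 : Disjoint {x | x ∈ M} ({w₀} : Set V) := by
      rw [Set.disjoint_singleton_right]; exact hw0M
    have d7 : Disjoint {x | x ∈ M} ({wl} : Set V) := by
      rw [Set.disjoint_singleton_right]; exact hwlM
    have d8 : Disjoint ({u} : Set V) ({w₀} : Set V) := by
      rw [Set.disjoint_singleton]; exact fun h => hw0u h.symm
    have d9 : Disjoint ({u} : Set V) ({wl} : Set V) := by
      rw [Set.disjoint_singleton]; exact fun h => hwlu h.symm
    have d10 : Disjoint ({w₀} : Set V) ({wl} : Set V) := by simp [hw0wl]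
    rintro (i | j) (i' | j') hne <;>
      first
        | (fin_cases i <;> fin_cases i' <;>
            simp only [Sum.elim_inl, Sum.elim_inr, Matrix.cons_val_zero, Matrix.cons_val_one,
              Matrix.head_cons, Matrix.cons_val_two, Matrix.tail_cons])
        | (fin_cases i <;> fin_cases j' <;>
            simp only [Sum.elim_inl, Sum.elim_inr, Matrix.cons_val_zero, Matrix.cons_val_one,
              Matrix.head_cons, Matrix.cons_val_two, Matrix.tail_cons])
        | (fin_cases j <;> fin_cases i' <;>
            simp only [Sum.elim_inl, Sum.elim_inr, Matrix.cons_val_zero, Matrix.cons_val_one,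
              Matrix.head_cons, Matrix.cons_val_two, Matrix.tail_cons])
        | (fin_cases j <;> fin_cases j' <;>
            simp only [Sum.elim_inl, Sum.elim_inr, Matrix.cons_val_zero, Matrix.cons_val_one,
              Matrix.head_cons, Matrix.cons_val_two, Matrix.tail_cons])
    all_goals first
      | exact absurd rfl hne
      | exact d1 | exact d1.symm | exact d2 | exact d2.symm | exact d3 | exact d3.symm
      | exact d4 | exact d4.symm | exact d5 | exact d5.symm | exact d6 | exact d6.symm
      | exact d7 | exact d7.symm | exact d8 | exact d8.symm | exact d9 | exact d9.symm
      | exact d10 | exact d10.symm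
  · rintro (i | j) (i' | j') hab
    · exact absurd hab (by simp)
    · fin_cases i <;> fin_cases j' <;> simp only [Sum.elim_inl, Sum.elim_inr,
        Matrix.cons_val_zero, Matrix.cons_val_one, Matrix.head_cons, Matrix.cons_val_two,
        Matrix.tail_cons] <;>
        first
        | exact ⟨v₀, rfl, u, rfl, hA0.symm⟩
        | exact ⟨v₀, rfl, w₀, rfl, hadj0⟩
        | exact ⟨v₀, rfl, wl, rfl, hadjwl0.symm⟩
        | exact ⟨M.head hMne, hheadM, u, rfl, hAh.symm⟩
        | exact ⟨M.head hMne, hheadM, w₀, rfl, hadjw0h.symm⟩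
        | exact ⟨M.getLast hMne, hlastM, wl, rfl, hadjMl⟩
    · fin_cases j <;> fin_cases i' <;> simp only [Sum.elim_inl, Sum.elim_inr,
        Matrix.cons_val_zero, Matrix.cons_val_one, Matrix.head_cons, Matrix.cons_val_two,
        Matrix.tail_cons] <;>
        first
        | exact ⟨u, rfl, v₀, rfl, hA0⟩
        | exact ⟨w₀, rfl, v₀, rfl, hadj0.symm⟩
        | exact ⟨wl, rfl, v₀, rfl, hadjwl0⟩
        | exact ⟨u, rfl, M.head hMne, hheadM, hAh⟩
        | exact ⟨w₀, rfl, M.head hMne, hheadM, hadjw0h⟩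
        | exact ⟨wl, rfl, M.getLast hMne, hlastM, hadjMl.symm⟩
    · exact absurd hab (by simp)

/-- Key combinatorial bound for outerplanar graphs:
`∑_{v ~ u} deg v + 4 ≤ 3 deg u + n`. -/
lemma sum_deg_nbhd {V : Type*} [Fintype V] [DecidableEq V] (G : SimpleGraph V)
    [DecidableRel G.Adj]
    (hK4 : ¬ MinorOf (completeGraph (Fin 4)) G)
    (hK23 : ¬ MinorOf (completeBipartiteGraph (Fin 2) (Fin 3)) G)
    (u : V) (hd : 0 < G.degree u) (hn : 2 ≤ Fintype.card V) :
    (∑ v ∈ G.neighborFinset u, G.degree v) + 4 ≤ 3 * G.degree u + Fintype.card V := by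
  classical
  set A : Finset V := G.neighborFinset u with hA
  set Rf : Finset V := Finset.univ.filter (fun x => x ≠ u ∧ ¬ G.Adj u x) with hRf
  set dA : V → ℕ := fun v => (A.filter (fun x => G.Adj v x)).card with hdA
  set dR : V → ℕ := fun v => (Rf.filter (fun x => G.Adj v x)).card with hdR
  have hmemA : ∀ x, x ∈ A ↔ G.Adj u x := fun x => G.mem_neighborFinset u x
  have hmemR : ∀ x, x ∈ Rf ↔ (x ≠ u ∧ ¬ G.Adj u x) := by
    intro x; rw [hRf, Finset.mem_filter]; simp
  -- 1. degree partition
  have hdeg : ∀ v ∈ A, G.degree v = 1 + dA v + dR v := by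
    intro v hv
    have hvu : G.Adj u v := (hmemA v).mp hv
    have hsplit : G.neighborFinset v = {u} ∪ A.filter (fun x => G.Adj v x)
        ∪ Rf.filter (fun x => G.Adj v x) := by
      ext x
      simp only [mem_neighborFinset, Finset.mem_union, Finset.mem_singleton, Finset.mem_filter,
        hmemA, hmemR]
      constructor
      · intro hx
        by_cases hxu : x = u
        · exact Or.inl (Or.inl hxu)
        · by_cases hux : G.Adj u x
          · exact Or.inl (Or.inr ⟨hux, hx⟩)
          · exact Or.inr ⟨⟨hxu, hux⟩, hx⟩
      · rintro ((rfl | ⟨-, h⟩) | ⟨-, h⟩)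
        · exact hvu.symm
        · exact h
        · exact h
    have hd1 : Disjoint ({u} : Finset V) (A.filter (fun x => G.Adj v x)) := by
      simp only [Finset.disjoint_singleton_left, Finset.mem_filter, hmemA]
      rintro ⟨h, -⟩
      exact G.loopless.irrefl u h
    have hd2 : Disjoint ({u} : Finset V) (Rf.filter (fun x => G.Adj v x)) := by
      simp only [Finset.disjoint_singleton_left, Finset.mem_filter, hmemR]
      rintro ⟨⟨h, -⟩, -⟩
      exact h rfl
    have hd3 : Disjoint (A.filter (fun x => G.Adj v x)) (Rf.filter (fun x => G.Adj v x)) := by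
      rw [Finset.disjoint_left]
      intro x hx hx'
      rw [Finset.mem_filter, hmemA] at hx
      rw [Finset.mem_filter, hmemR] at hx'
      exact hx'.1.2 hx.1
    rw [← card_neighborFinset_eq_degree, hsplit,
      Finset.card_union_of_disjoint (by rw [Finset.disjoint_union_left]; exact ⟨hd2, hd3⟩),
      Finset.card_union_of_disjoint hd1, Finset.card_singleton]
  have hsum : (∑ v ∈ A, G.degree v) = A.card + (∑ v ∈ A, dA v) + (∑ v ∈ A, dR v) := by
    rw [Finset.sum_congr rfl hdeg, Finset.sum_add_distrib, Finset.sum_add_distrib,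
      Finset.sum_const, smul_eq_mul, mul_one]
  -- 3. the graph induced on A is a forest
  set GA : SimpleGraph {x // x ∈ A} := G.comap (Subtype.val) with hGA
  haveI : DecidableRel GA.Adj := Classical.decRel _
  have hGAac : GA.IsAcyclic := by
    by_contra hcyc
    rw [SimpleGraph.IsAcyclic] at hcyc
    push_neg at hcyc
    obtain ⟨a, c, hc⟩ := hcyc
    obtain ⟨l, hnd, hlen, hch, hcl, -⟩ := cycle_list c hc
    have hlne : l ≠ [] := by intro h; rw [h] at hlen; simp at hlen
    set lV : List V := l.map Subtype.val with hlV
    have hlVne : lV ≠ [] := by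
      intro h
      rw [hlV] at h
      exact hlne (List.map_eq_nil_iff.mp h)
    apply hK4
    apply k4_minor_of_cycle (G := G) (u := u) (l := lV)
    · exact hnd.map Subtype.val_injective
    · simpa [hlV] using hlen
    · exact (List.isChain_map _).mpr hch
    · intro hne
      rw [List.getLast_map , List.head_map]
      exact hcl hlne
    · intro x hx
      rw [hlV, List.mem_map] at hx
      obtain ⟨b, hb, rfl⟩ := hx
      exact (hmemA _).mp b.2
  have hAne : A.Nonempty := Finset.card_pos.mp hd
  haveI : Nonempty {x // x ∈ A} := ⟨⟨hAne.choose, hAne.choose_spec⟩⟩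
  have hGAcard : GA.edgeFinset.card + 1 ≤ A.card := by
    have := acyclic_card_edgeFinset_le hGAac
    rwa [Fintype.card_coe] at this
  have hGAdeg : ∀ a : {x // x ∈ A}, GA.degree a = dA ↑a := by
    intro a
    rw [← card_neighborFinset_eq_degree]
    show #(GA.neighborFinset a) = #(A.filter fun x => G.Adj ↑a x)
    refine Finset.card_bij (fun (b : {x // x ∈ A}) (_ : b ∈ GA.neighborFinset a) => (b : V)) ?_ ?_ ?_
    · intro b hb
      rw [mem_neighborFinset] at hb
      rw [Finset.mem_filter]
      exact ⟨b.2, hb⟩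
    · intro b _ b' _ h
      exact Subtype.val_injective h
    · intro x hx
      rw [Finset.mem_filter] at hx
      exact ⟨⟨x, hx.1⟩, by rw [mem_neighborFinset]; exact hx.2, rfl⟩
  have hsumA : (∑ v ∈ A, dA v) + 2 ≤ 2 * A.card := by
    have h1 : ∑ a : {x // x ∈ A}, GA.degree a = ∑ v ∈ A, dA v := by
      rw [Finset.sum_congr rfl (fun a _ => hGAdeg a)]
      exact Finset.sum_coe_sort A dA
    have h2 := GA.sum_degrees_eq_twice_card_edges
    omega
  -- 4. the bipartite graph between A and the rest is a forest
  set BG : SimpleGraph {x : V // x ≠ u} :=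
    { Adj := fun x y => G.Adj ↑x ↑y ∧ (G.Adj u ↑x ↔ ¬ G.Adj u ↑y)
      symm := ⟨by
        rintro x y ⟨h1, h2⟩
        exact ⟨h1.symm, by tauto⟩⟩
      loopless := ⟨by
        rintro x ⟨h, -⟩
        exact G.loopless.irrefl _ h⟩ } with hBG
  haveI : DecidableRel BG.Adj := Classical.decRel _
  have hBGac : BG.IsAcyclic := by
    by_contra hcyc
    rw [SimpleGraph.IsAcyclic] at hcyc
    push_neg at hcyc
    obtain ⟨a, c, hc⟩ := hcyc
    have hcnil : ¬ c.Nil := hc.not_nil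
    have hadj1 : BG.Adj a (c.getVert 1) := SimpleGraph.Walk.adj_snd hcnil
    by_cases hstart : G.Adj u ↑a
    case neg =>
      have hstart2 : G.Adj u ↑(c.getVert 1) := by
        rcases hadj1 with ⟨-, hiff⟩
        by_contra hcon
        exact hstart (hiff.mpr hcon)
      have hmem : c.getVert 1 ∈ c.support :=
        SimpleGraph.Walk.mem_support_iff_exists_getVert.mpr ⟨1, rfl, by have := hc.three_le_length; omega⟩
      obtain ⟨l, hnd, hlen, hch, hcl, hhd⟩ := cycle_list (c.rotate _ hmem) (hc.rotate hmem)
      have hlne : l ≠ [] := by intro h; rw [h] at hlen; simp at hlen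
      set lV : List V := l.map Subtype.val with hlV
      have hlVne : lV ≠ [] := by
        intro h; rw [hlV] at h; exact hlne (List.map_eq_nil_iff.mp h)
      apply hK23
      apply k23_minor_of_cycle (G := G) (u := u) (l := lV)
      · exact hnd.map Subtype.val_injective
      · simpa [hlV] using hlen
      · exact (List.isChain_map _).mpr hch
      · intro hne
        rw [List.getLast_map, List.head_map]
        exact hcl hlne
      · intro hne
        rw [List.head_map]
        rw [hhd hlne]
        exact hstart2
      · intro x hx
        rw [hlV, List.mem_map] at hx
        obtain ⟨b, hb, rfl⟩ := hx
        exact b.2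
    case pos =>
      have hmem : a ∈ c.support := c.start_mem_support
      obtain ⟨l, hnd, hlen, hch, hcl, hhd⟩ := cycle_list (c.rotate _ hmem) (hc.rotate hmem)
      have hlne : l ≠ [] := by intro h; rw [h] at hlen; simp at hlen
      set lV : List V := l.map Subtype.val with hlV
      have hlVne : lV ≠ [] := by
        intro h; rw [hlV] at h; exact hlne (List.map_eq_nil_iff.mp h)
      apply hK23
      apply k23_minor_of_cycle (G := G) (u := u) (l := lV)
      · exact hnd.map Subtype.val_injective
      · simpa [hlV] using hlen
      · exact (List.isChain_map _).mpr hch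
      · intro hne
        rw [List.getLast_map, List.head_map]
        exact hcl hlne
      · intro hne
        rw [List.head_map]
        rw [hhd hlne]
        exact hstart
      · intro x hx
        rw [hlV, List.mem_map] at hx
        obtain ⟨b, hb, rfl⟩ := hx
        exact b.2
  haveI hVune : Nonempty {x : V // x ≠ u} := by
    obtain ⟨x, hx⟩ := Fintype.exists_ne_of_one_lt_card (by omega) u
    exact ⟨⟨x, hx⟩⟩
  have hVucard : Fintype.card {x : V // x ≠ u} = Fintype.card V - 1 := by
    have := Fintype.card_subtype_compl (fun x : V => x = u)
    simp only [Fintype.card_subtype_eq] at this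
    exact this
  have hBGcard : BG.edgeFinset.card + 2 ≤ Fintype.card V := by
    have h1 := acyclic_card_edgeFinset_le hBGac
    rw [hVucard] at h1
    omega
  -- degrees of BG
  set f : V → ℕ := fun v => if G.Adj u v then dR v else dA v with hf
  have hBGdeg : ∀ x : {x : V // x ≠ u}, BG.degree x = f ↑x := by
    intro x
    rw [← card_neighborFinset_eq_degree]
    show #(BG.neighborFinset x) = if G.Adj u ↑x then dR ↑x else dA ↑x
    by_cases hx : G.Adj u ↑x
    · rw [if_pos hx]
      show _ = #(Rf.filter fun y => G.Adj ↑x y)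
      refine Finset.card_bij (fun (b : {x : V // x ≠ u}) (_ : b ∈ BG.neighborFinset x) => (b : V)) ?_ ?_ ?_
      · intro b hb
        rw [mem_neighborFinset] at hb
        obtain ⟨h1, h2⟩ := hb
        rw [Finset.mem_filter, hmemR]
        exact ⟨⟨b.2, h2.mp hx⟩, h1⟩
      · intro b _ b' _ h
        exact Subtype.val_injective h
      · intro w hw
        rw [Finset.mem_filter, hmemR] at hw
        refine ⟨⟨w, hw.1.1⟩, ?_, rfl⟩
        rw [mem_neighborFinset]
        exact ⟨hw.2, by simp [hx, hw.1.2]⟩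
    · rw [if_neg hx]
      show _ = #(A.filter fun y => G.Adj ↑x y)
      refine Finset.card_bij (fun (b : {x : V // x ≠ u}) (_ : b ∈ BG.neighborFinset x) => (b : V)) ?_ ?_ ?_
      · intro b hb
        rw [mem_neighborFinset] at hb
        obtain ⟨h1, h2⟩ := hb
        rw [Finset.mem_filter, hmemA]
        refine ⟨?_, h1⟩
        by_contra hcon
        exact hx (h2.mpr hcon)
      · intro b _ b' _ h
        exact Subtype.val_injective h
      · intro w hw
        rw [Finset.mem_filter, hmemA] at hw
        refine ⟨⟨w, fun h => G.loopless.irrefl u (h ▸ hw.1)⟩, ?_, rfl⟩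
        rw [mem_neighborFinset]
        exact ⟨hw.2, by simp [hx, hw.1]⟩
  -- sum over the two sides
  have hsplitV : Finset.univ.filter (fun x : V => x ≠ u) = A ∪ Rf := by
    ext v
    simp only [Finset.mem_filter, Finset.mem_union, Finset.mem_univ, true_and, hmemA, hmemR]
    constructor
    · intro hv
      by_cases h : G.Adj u v
      · exact Or.inl h
      · exact Or.inr ⟨hv, h⟩
    · rintro (h | ⟨h, -⟩)
      · exact (G.ne_of_adj h).symm
      · exact h
  have hdisj : Disjoint A Rf := by
    rw [Finset.disjoint_left]
    intro x hx hx'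
    rw [hmemA] at hx
    rw [hmemR] at hx'
    exact hx'.2 hx
  have hsum2 : ∑ x : {x : V // x ≠ u}, BG.degree x = (∑ v ∈ A, dR v) + (∑ w ∈ Rf, dA w) := by
    have h1 : ∑ x : {x : V // x ≠ u}, BG.degree x = ∑ x : {x : V // x ≠ u}, f ↑x :=
      Finset.sum_congr rfl (fun x _ => hBGdeg x)
    have h2 := Finset.sum_subtype (p := fun x : V => x ≠ u) (F := inferInstance)
      (Finset.univ.filter (fun x : V => x ≠ u)) (by simp) f
    rw [h1, ← h2, hsplitV, Finset.sum_union hdisj]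
    congr 1
    · apply Finset.sum_congr rfl
      intro v hv
      simp only [hf]
      rw [if_pos ((hmemA v).mp hv)]
    · apply Finset.sum_congr rfl
      intro w hw
      simp only [hf]
      rw [if_neg ((hmemR w).mp hw).2]
  have hdouble : (∑ v ∈ A, dR v) = ∑ w ∈ Rf, dA w := by
    have e1 : (∑ v ∈ A, dR v) = ∑ v ∈ A, ∑ w ∈ Rf, (if G.Adj v w then 1 else 0) := by
      apply Finset.sum_congr rfl
      intro v _
      rw [hdR]
      exact Finset.card_filter _ _
    have e2 : (∑ w ∈ Rf, dA w) = ∑ w ∈ Rf, ∑ v ∈ A, (if G.Adj w v then 1 else 0) := by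
      apply Finset.sum_congr rfl
      intro w _
      rw [hdA]
      exact Finset.card_filter _ _
    rw [e1, e2, Finset.sum_comm]
    apply Finset.sum_congr rfl
    intro w _
    apply Finset.sum_congr rfl
    intro v _
    congr 1
    rw [adj_comm]
  have hhsBG := BG.sum_degrees_eq_twice_card_edges
  have hdRbound : (∑ v ∈ A, dR v) + (∑ v ∈ A, dR v) + 4 ≤ 2 * Fintype.card V := by
    rw [hdouble] at hsum2 ⊢
    nth_rewrite 2 [← hdouble] at hsum2
    omega
  -- conclusion
  have hdu : G.degree u = A.card := (G.card_neighborFinset_eq_degree u).symm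
  rw [hsum]
  omega

lemma spectrum_le_of_mulVec_le {V : Type*} [Fintype V] [DecidableEq V] [Nonempty V]
    (M : Matrix V V ℝ) (hM : ∀ i j, 0 ≤ M i j) (z : V → ℝ) (hz : ∀ i, 0 < z i) (μ : ℝ)
    (h : ∀ i, M.mulVec z i ≤ μ * z i) : ∀ θ ∈ spectrum ℝ M, θ ≤ μ := by
  intro θ hθ
  rw [spectrum.mem_iff] at hθ
  have hdet : ((algebraMap ℝ (Matrix V V ℝ)) θ - M).det = 0 := by
    by_contra h0
    exact hθ ((Matrix.isUnit_iff_isUnit_det _).mpr (isUnit_iff_ne_zero.mpr h0))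
  obtain ⟨y, hy0, hy⟩ := Matrix.exists_mulVec_eq_zero_iff.mpr hdet
  have hMy : M.mulVec y = θ • y := by
    rw [Algebra.algebraMap_eq_smul_one, Matrix.sub_mulVec, sub_eq_zero] at hy
    rw [← hy, Matrix.smul_mulVec, Matrix.one_mulVec]
  obtain ⟨i₀, -, hmax⟩ := Finset.exists_max_image Finset.univ (fun i => |y i| / z i)
    ⟨Classical.arbitrary V, Finset.mem_univ _⟩
  set t := |y i₀| / z i₀ with htdef
  have hyb : ∀ j, |y j| ≤ t * z j := fun j => (div_le_iff₀ (hz j)).mp (hmax j (mem_univ _))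
  have ht0 : 0 < t := by
    obtain ⟨j, hj⟩ := Function.ne_iff.mp hy0
    have h1 : 0 < |y j| / z j := div_pos (abs_pos.mpr hj) (hz j)
    exact lt_of_lt_of_le h1 (hmax j (mem_univ _))
  have hti : t * z i₀ = |y i₀| := div_mul_cancel₀ _ (ne_of_gt (hz i₀))
  have key : |θ| * (t * z i₀) ≤ t * (μ * z i₀) := by
    rw [hti]
    have e1 : |θ| * |y i₀| = |(M.mulVec y) i₀| := by
      rw [hMy, Pi.smul_apply, smul_eq_mul, abs_mul]
    rw [e1]
    have e2 : (M.mulVec y) i₀ = ∑ j, M i₀ j * y j := by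
      rw [Matrix.mulVec, dotProduct]
    rw [e2]
    calc |∑ j, M i₀ j * y j| ≤ ∑ j, |M i₀ j * y j| := Finset.abs_sum_le_sum_abs _ _
      _ = ∑ j, M i₀ j * |y j| := by
          apply Finset.sum_congr rfl
          intro j _
          rw [abs_mul, abs_of_nonneg (hM i₀ j)]
      _ ≤ ∑ j, M i₀ j * (t * z j) := by
          apply Finset.sum_le_sum
          intro j _
          exact mul_le_mul_of_nonneg_left (hyb j) (hM i₀ j)
      _ = t * ∑ j, M i₀ j * z j := by
          rw [Finset.mul_sum]
          apply Finset.sum_congr rfl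
          intro j _
          ring
      _ = t * (M.mulVec z) i₀ := by
          rw [Matrix.mulVec, dotProduct]
      _ ≤ t * (μ * z i₀) := mul_le_mul_of_nonneg_left (h i₀) (le_of_lt ht0)
  have hpos : 0 < t * z i₀ := mul_pos ht0 (hz i₀)
  have habs : |θ| ≤ μ := by
    have h2 : |θ| * (t * z i₀) ≤ μ * (t * z i₀) := by
      calc |θ| * (t * z i₀) ≤ t * (μ * z i₀) := key
        _ = μ * (t * z i₀) := by ring
    exact le_of_mul_le_mul_right h2 hpos
  exact le_trans (le_abs_self θ) habs

end OuterplanarAux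

theorem outerplanar_spectral_bound {V : Type*} [Fintype V] [DecidableEq V]
    (G : SimpleGraph V) (hconn : G.Connected) (hop : Outerplanar G) (n : ℕ)
    (hn : Fintype.card V = n) (h3 : 3 ≤ n) :
    specRad G ≤ 3 / 2 + Real.sqrt ((n : ℝ) - 7 / 4) := by
  classical
  haveI hne : Nonempty V := by
    rw [← Fintype.card_pos_iff]
    omega
  set s : ℝ := Real.sqrt ((n : ℝ) - 7 / 4) with hsdef
  have hn74 : (0:ℝ) ≤ (n : ℝ) - 7/4 := by
    have : (3:ℝ) ≤ (n:ℝ) := by exact_mod_cast h3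
    linarith
  have hs2 : s ^ 2 = (n : ℝ) - 7 / 4 := Real.sq_sqrt hn74
  have hs1 : 1 ≤ s := by
    have h1 : (1:ℝ) ≤ (n : ℝ) - 7/4 := by
      have : (3:ℝ) ≤ (n:ℝ) := by exact_mod_cast h3
      linarith
    calc (1:ℝ) = Real.sqrt 1 := by rw [Real.sqrt_one]
      _ ≤ s := Real.sqrt_le_sqrt h1
  set c : ℝ := s - 3/2 with hcdef
  set μ : ℝ := 3 + c with hμdef
  -- all degrees positive
  have hdeg1 : ∀ v : V, 0 < G.degree v := by
    intro v
    rw [G.degree_pos_iff_exists_adj]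
    obtain ⟨w, hw⟩ := Fintype.exists_ne_of_one_lt_card (by omega) v
    obtain ⟨p⟩ := hconn.preconnected v w
    have hnil : ¬ p.Nil := SimpleGraph.Walk.not_nil_of_ne (Ne.symm hw)
    exact ⟨p.getVert 1, SimpleGraph.Walk.adj_snd hnil⟩
  set z : V → ℝ := fun v => (G.degree v : ℝ) + c with hzdef
  have hzpos : ∀ v, 0 < z v := by
    intro v
    have h1 : (1:ℝ) ≤ (G.degree v : ℝ) := by exact_mod_cast hdeg1 v
    simp only [hzdef, hcdef]
    linarith
  have hkey : ∀ v, ((G.adjMatrix ℝ).mulVec z) v ≤ μ * z v := by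
    intro v
    rw [adjMatrix_mulVec_apply]
    have hsum := sum_deg_nbhd G hop.1 hop.2 v (hdeg1 v) (by omega)
    rw [hn] at hsum
    have hsumR : (∑ w ∈ G.neighborFinset v, (G.degree w : ℝ)) ≤
        3 * (G.degree v : ℝ) + (n : ℝ) - 4 := by
      have := hsum
      have hcast : ((∑ w ∈ G.neighborFinset v, G.degree w : ℕ) : ℝ) + 4 ≤
          3 * (G.degree v : ℝ) + (n : ℝ) := by exact_mod_cast this
      push_cast at hcast ⊢
      linarith
    have hsplit : (∑ w ∈ G.neighborFinset v, z w) =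
        (∑ w ∈ G.neighborFinset v, (G.degree w : ℝ)) + c * (G.degree v : ℝ) := by
      simp only [hzdef]
      rw [Finset.sum_add_distrib, Finset.sum_const, nsmul_eq_mul,
        G.card_neighborFinset_eq_degree, mul_comm]
    rw [hsplit]
    have hcc : (3 + c) * c = (n : ℝ) - 4 := by
      simp only [hcdef]
      nlinarith [hs2]
    have : μ * z v = (3 + c) * (G.degree v : ℝ) + ((n:ℝ) - 4) := by
      simp only [hμdef, hzdef]
      rw [← hcc]
      ring
    rw [this]
    nlinarith [hsumR]
  have hMnn : ∀ i j : V, (0:ℝ) ≤ (G.adjMatrix ℝ) i j := by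
    intro i j
    rw [SimpleGraph.adjMatrix_apply]
    by_cases h : G.Adj i j <;> simp [h]
  have hbound := spectrum_le_of_mulVec_le (G.adjMatrix ℝ) hMnn z hzpos μ hkey
  have hμ : μ = 3/2 + s := by rw [hμdef, hcdef]; ring
  show sSup (spectrum ℝ (G.adjMatrix ℝ)) ≤ 3/2 + s
  apply Real.sSup_le
  · intro x hx
    rw [← hμ]
    exact hbound x hx
  · linarith
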